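/- For every n ≥ 1, the path graph P_n on n vertices satisfies UM(P_n) = CF(P_n) = ODD(P_n) = ⌈log₂(n + 1)⌉. -/

import Mathlib

open scoped Classical

noncomputable section

/-- A conflict-free coloring of a hyperedge set `E` with `k` colors: every hyperedge
has some color occurring on exactly one of its vertices. -/
def IsCFColoring {V : Type} {k : ℕ} (E : Set (Finset V)) (C : V → Fin k) : Prop :=
  ∀ e ∈ E, ∃ c : Fin k, (e.filter fun v => C v = c).card = 1

/-- A unique-maximum coloring of a hyperedge set `E` with `k` colors: every hyperedge
has exactly one vertex whose color is maximum on the hyperedge. -/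
def IsUMColoring {V : Type} {k : ℕ} (E : Set (Finset V)) (C : V → Fin k) : Prop :=
  ∀ e ∈ E, ∃! v, v ∈ e ∧ ∀ u ∈ e, C u ≤ C v

/-- An odd coloring of a hyperedge set `E` with `k` colors: every hyperedge
has some color occurring on an odd number of its vertices. -/
def IsOddColoring {V : Type} {k : ℕ} (E : Set (Finset V)) (C : V → Fin k) : Prop :=
  ∀ e ∈ E, ∃ c : Fin k, Odd ((e.filter fun v => C v = c).card)

/-- The conflict-free chromatic number of a hypergraph. -/
def cfNum {V : Type} (E : Set (Finset V)) : ℕ :=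
  sInf {k | ∃ C : V → Fin k, IsCFColoring E C}

/-- The unique-maximum chromatic number of a hypergraph. -/
def umNum {V : Type} (E : Set (Finset V)) : ℕ :=
  sInf {k | ∃ C : V → Fin k, IsUMColoring E C}

/-- The odd chromatic number of a hypergraph. -/
def oddNum {V : Type} (E : Set (Finset V)) : ℕ :=
  sInf {k | ∃ C : V → Fin k, IsOddColoring E C}

/-- The hyperedges of the path hypergraph of a graph `G`: vertex sets of simple paths. -/
def pathEdges {V : Type} (G : SimpleGraph V) : Set (Finset V) :=
  {S | ∃ (u v : V) (p : G.Walk u v), p.IsPath ∧ S = p.support.toFinset}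

/-- Unique-maximum chromatic number of a graph with respect to paths. -/
def UM {V : Type} (G : SimpleGraph V) : ℕ := umNum (pathEdges G)

/-- Conflict-free chromatic number of a graph with respect to paths. -/
def CF {V : Type} (G : SimpleGraph V) : ℕ := cfNum (pathEdges G)

/-- Odd chromatic number of a graph with respect to paths. -/
def ODD {V : Type} (G : SimpleGraph V) : ℕ := oddNum (pathEdges G)

/-- The complete binary tree with `d` levels (`2^d - 1` vertices), with vertices the
binary strings of length `< d`; each vertex `l` is adjacent to its children `b :: l`. -/
def binaryTree (d : ℕ) : SimpleGraph {l : List Bool // l.length < d} :=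
  SimpleGraph.fromRel fun a b => ∃ bit : Bool, b.1 = bit :: a.1

/-- `IsSubdivPaths G H f P` : the data `f` (branch vertices) and `P` (a path of `H` for
every edge of `G`) witness that `H` contains a subdivision of `G` as a subgraph:
`f` is injective, the paths are internally disjoint from each other and from the
branch vertices. -/
def IsSubdivPaths {V W : Type} (G : SimpleGraph V) (H : SimpleGraph W) (f : V → W)
    (P : ∀ u v, G.Adj u v → H.Walk (f u) (f v)) : Prop :=
  Function.Injective f ∧
  (∀ u v (h : G.Adj u v), (P u v h).IsPath) ∧
  (∀ u v (h : G.Adj u v), P v u h.symm = (P u v h).reverse) ∧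
  (∀ u v (h : G.Adj u v) (w : W),
    w ∈ (P u v h).support → w ≠ f u → w ≠ f v → w ∉ Set.range f) ∧
  (∀ u v (h : G.Adj u v) (u' v' : V) (h' : G.Adj u' v'), s(u, v) ≠ s(u', v') →
    ∀ w : W, w ∈ (P u v h).support → w ∈ (P u' v' h').support → w ∈ Set.range f)

/-- `H` contains a subdivision of `G` as a subgraph. -/
def ContainsSubdivision {V W : Type} (G : SimpleGraph V) (H : SimpleGraph W) : Prop :=
  ∃ f P, IsSubdivPaths G H f P

/-- `IsSubdivision G H f P` : the data `f`, `P` witness that `H` is (exactly) a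
subdivision of `G`: additionally to `IsSubdivPaths`, every vertex of `H` and every
edge of `H` comes from some path replacing an edge of `G`, or is a branch vertex. -/
def IsSubdivision {V W : Type} (G : SimpleGraph V) (H : SimpleGraph W) (f : V → W)
    (P : ∀ u v, G.Adj u v → H.Walk (f u) (f v)) : Prop :=
  IsSubdivPaths G H f P ∧
  (∀ w : W, w ∈ Set.range f ∨ ∃ u v h, w ∈ (P u v h).support) ∧
  (∀ a b : W, H.Adj a b ↔ ∃ u v h, s(a, b) ∈ (P u v h).edges)

/-- `H` is a subdivision of `G`. -/
def Subdivides {V W : Type} (G : SimpleGraph V) (H : SimpleGraph W) : Prop :=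
  ∃ f P, IsSubdivision G H f P

/-- A graph is UM-critical if every proper subgraph has strictly smaller
unique-maximum chromatic number with respect to paths. -/
def UMCritical {V : Type} (G : SimpleGraph V) : Prop :=
  ∀ G' : G.Subgraph, G' ≠ ⊤ → UM G'.coe < UM G

/-- A graph is `k`-UM-critical if it is UM-critical and its UM number equals `k`. -/
def UMCriticalK {V : Type} (k : ℕ) (G : SimpleGraph V) : Prop :=
  UMCritical G ∧ UM G = k

/-- A family of sequences of distinct elements of `Fin n` is prefix set-free if no
nonempty prefix of a member (including the member itself) has the same underlying set
as another member. -/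
def IsPSF {n : ℕ} (F : Finset (List (Fin n))) : Prop :=
  (∀ l ∈ F, l.Nodup) ∧
  ∀ A ∈ F, ∀ B ∈ F, A ≠ B →
    ∀ p : List (Fin n), p ≠ [] → p <+: A → p.toFinset ≠ B.toFinset

/-- A `[k,d,n]` prefix set-free family: ground set `Fin n`, every sequence of length at
least `k`, and at least `2^d` members. -/
def IsPSFFamily (k d n : ℕ) (F : Finset (List (Fin n))) : Prop :=
  IsPSF F ∧ (∀ l ∈ F, k ≤ l.length) ∧ 2 ^ d ≤ F.card


section Aux

lemma val_between {t m1 m2 : ℕ} (h1 : 0 < m1) (h : m1 < m2)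
    (e1 : padicValNat 2 m1 = t) (e2 : padicValNat 2 m2 = t) :
    ∃ m, m1 < m ∧ m < m2 ∧ t < padicValNat 2 m := by
  have h2 : 0 < m2 := h1.trans h
  have d1 : 2 ^ t ∣ m1 := e1 ▸ pow_padicValNat_dvd
  have d2 : 2 ^ t ∣ m2 := e2 ▸ pow_padicValNat_dvd
  obtain ⟨a, ha⟩ := d1
  obtain ⟨b, hb⟩ := d2
  have hpt : 0 < (2:ℕ) ^ t := Nat.pow_pos (by norm_num)
  have hodd_a : ¬ 2 ∣ a := by
    intro ⟨c, hc⟩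
    have : 2 ^ (t+1) ∣ m1 := ⟨c, by rw [ha, hc]; ring⟩
    rw [padicValNat_dvd_iff] at this
    omega
  have hodd_b : ¬ 2 ∣ b := by
    intro ⟨c, hc⟩
    have : 2 ^ (t+1) ∣ m2 := ⟨c, by rw [hb, hc]; ring⟩
    rw [padicValNat_dvd_iff] at this
    omega
  have hab : a < b := by
    by_contra hc
    push_neg at hc
    exact absurd (Nat.mul_le_mul_left (2^t) hc) (by omega)
  have hab1 : a + 1 < b := by omega
  have key1 : 2 ^ t * a < 2 ^ t * (a + 1) := mul_lt_mul_of_pos_left (by omega) hpt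
  have key2 : 2 ^ t * (a + 1) < 2 ^ t * b := mul_lt_mul_of_pos_left hab1 hpt
  refine ⟨2 ^ t * (a + 1), by omega, by omega, ?_⟩
  have : 2 ^ (t+1) ∣ 2 ^ t * (a+1) := by
    obtain ⟨c, hc⟩ : 2 ∣ a + 1 := by omega
    exact ⟨c, by rw [hc]; ring⟩
  rw [padicValNat_dvd_iff] at this
  omega

lemma um_Icc (a b : ℕ) (hab : a ≤ b) :
    ∃! m, m ∈ Finset.Icc a b ∧
      ∀ u ∈ Finset.Icc a b, padicValNat 2 (u+1) ≤ padicValNat 2 (m+1) := by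
  obtain ⟨m, hm, hmax⟩ := Finset.exists_max_image (Finset.Icc a b)
    (fun u => padicValNat 2 (u+1)) ⟨a, Finset.mem_Icc.mpr ⟨le_refl a, hab⟩⟩
  refine ⟨m, ⟨hm, hmax⟩, ?_⟩
  rintro m' ⟨hm', hmax'⟩
  by_contra hne
  have ht : padicValNat 2 (m'+1) = padicValNat 2 (m+1) :=
    le_antisymm (hmax m' hm') (hmax' m hm)
  simp only [Finset.mem_Icc] at hm hm'
  rcases Nat.lt_or_ge m' m with hlt | hge
  · obtain ⟨w, hw1, hw2, hw3⟩ := val_between (Nat.succ_pos m') (by omega) ht rfl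
    have hwm : w - 1 ∈ Finset.Icc a b := Finset.mem_Icc.mpr (by omega)
    have := hmax (w-1) hwm
    have hww : w - 1 + 1 = w := by omega
    rw [hww] at this
    omega
  · have hlt : m < m' := by omega
    obtain ⟨w, hw1, hw2, hw3⟩ := val_between (Nat.succ_pos m) (by omega) ht.symm rfl
    have hwm : w - 1 ∈ Finset.Icc a b := Finset.mem_Icc.mpr (by omega)
    have := hmax (w-1) hwm
    have hww : w - 1 + 1 = w := by omega
    rw [hww] at this
    omega

lemma path_support_Icc {n : ℕ} [DecidableEq (Fin n)] {u v : Fin n}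
    (p : (SimpleGraph.pathGraph n).Walk u v) (hp : p.IsPath) :
    p.support.toFinset = Finset.Icc (min u v) (max u v) := by
  induction p with
  | nil => simp
  | @cons u w v h q ih =>
    rw [SimpleGraph.Walk.cons_isPath_iff] at hp
    have hq := ih hp.1
    have huq : u ∉ Finset.Icc (min w v) (max w v) := by rw [← hq]; simpa using hp.2
    have hadj := SimpleGraph.pathGraph_adj.mp h
    simp only [Finset.mem_Icc, min_le_iff, le_max_iff, Fin.le_def, not_and_or, not_or,
      not_le] at huq
    ext x
    rw [SimpleGraph.Walk.support_cons, List.toFinset_cons, Finset.mem_insert, List.mem_toFinset,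
      ← List.mem_toFinset, hq]
    simp only [Finset.mem_Icc, min_le_iff, le_max_iff, Fin.le_def, Fin.ext_iff]
    omega

lemma pathEdges_pathGraph (n : ℕ) :
    pathEdges (SimpleGraph.pathGraph n) = {S | ∃ a b : Fin n, a ≤ b ∧ S = Finset.Icc a b} := by
  ext S
  constructor
  · rintro ⟨u, v, p, hp, rfl⟩
    exact ⟨min u v, max u v, min_le_max, by convert path_support_Icc p hp using 2⟩
  · rintro ⟨a, b, hab, rfl⟩
    obtain ⟨w⟩ := SimpleGraph.pathGraph_preconnected n a b
    refine ⟨a, b, w.toPath.1, w.toPath.2, ?_⟩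
    have h2 := path_support_Icc w.toPath.1 w.toPath.2
    rw [min_eq_left hab, max_eq_right hab] at h2
    exact (by convert h2.symm using 2)

lemma um_to_cf {V : Type} {k : ℕ} {E : Set (Finset V)} {C : V → Fin k}
    (h : IsUMColoring E C) : IsCFColoring E C := by
  intro e he
  obtain ⟨v, ⟨hv, hmax⟩, huniq⟩ := h e he
  refine ⟨C v, ?_⟩
  rw [Finset.card_eq_one]
  refine ⟨v, ?_⟩
  ext u
  simp only [Finset.mem_filter, Finset.mem_singleton]
  constructor
  · rintro ⟨hu, hc⟩
    exact huniq u ⟨hu, fun w hw => le_of_le_of_eq (hmax w hw) hc.symm⟩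
  · rintro rfl; exact ⟨hv, rfl⟩

lemma cf_to_odd {V : Type} {k : ℕ} {E : Set (Finset V)} {C : V → Fin k}
    (h : IsCFColoring E C) : IsOddColoring E C := by
  intro e he
  obtain ⟨c, hc⟩ := h e he
  exact ⟨c, hc ▸ odd_one⟩

lemma odd_lower {n k : ℕ} (hn : 1 ≤ n) (C : Fin n → Fin k)
    (h : IsOddColoring (pathEdges (SimpleGraph.pathGraph n)) C) : n + 1 ≤ 2 ^ k := by
  classical
  set π : Fin (n+1) → (Fin k → ZMod 2) := fun i c =>
    ((Finset.univ.filter (fun v : Fin n => v.val < i.val ∧ C v = c)).card : ZMod 2) with hπ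
  have key : ∀ i j : Fin (n+1), i.val < j.val → π i ≠ π j := by
    intro i j hij hpi
    have hjn : j.val ≤ n := by omega
    set a : Fin n := ⟨i.val, by omega⟩ with ha
    set b : Fin n := ⟨j.val - 1, by omega⟩ with hb
    have hab : a ≤ b := by simp [ha, hb, Fin.le_def]; omega
    have he : Finset.Icc a b ∈ pathEdges (SimpleGraph.pathGraph n) := by
      rw [pathEdges_pathGraph]; exact ⟨a, b, hab, rfl⟩
    obtain ⟨c, hodd⟩ := h _ he
    set A := Finset.univ.filter (fun v : Fin n => v.val < i.val ∧ C v = c) with hA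
    set B := Finset.univ.filter (fun v : Fin n => v.val < j.val ∧ C v = c) with hB
    have hsub : A ⊆ B := by
      intro v hv
      simp only [hA, hB, Finset.mem_filter] at *
      exact ⟨hv.1, by omega, hv.2.2⟩
    have heq : (Finset.Icc a b).filter (fun v => C v = c) = B \ A := by
      ext v
      by_cases hc : C v = c <;>
        simp [hA, hB, hc, Finset.mem_Icc, Fin.le_def, ha, hb] <;> omega
    have hcard : ((Finset.Icc a b).filter (fun v => C v = c)).card = B.card - A.card := by
      rw [heq, Finset.card_sdiff_of_subset hsub]
    have hcast : (A.card : ZMod 2) = (B.card : ZMod 2) := by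
      have := congrFun hpi c
      simpa [hπ, hA, hB] using this
    have hle : A.card ≤ B.card := Finset.card_le_card hsub
    have hz : ((B.card - A.card : ℕ) : ZMod 2) = 0 := by
      rw [Nat.cast_sub hle, hcast, sub_self]
    have hdvd : (2 : ℕ) ∣ B.card - A.card := by
      have := (ZMod.natCast_eq_zero_iff (B.card - A.card) 2).mp (by
        rw [Nat.cast_sub hle, hcast, sub_self])
      exact this
    rw [hcard] at hodd
    rw [Nat.odd_iff] at hodd
    omega
  have hinj : Function.Injective π := by
    intro i j hij
    by_contra hne
    rcases Nat.lt_or_ge i.val j.val with hl | hg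
    · exact key i j hl hij
    · have : j.val < i.val := by
        rcases Nat.lt_or_ge j.val i.val with h | h
        · exact h
        · exact absurd (Fin.ext (by omega)) hne
      exact key j i this hij.symm
  calc n + 1 = Fintype.card (Fin (n+1)) := (Fintype.card_fin _).symm
    _ ≤ Fintype.card (Fin k → ZMod 2) := Fintype.card_le_of_injective π hinj
    _ = 2 ^ k := by simp

end Aux

theorem stmt4 (n : ℕ) (hn : 1 ≤ n) :
    UM (SimpleGraph.pathGraph n) = Nat.clog 2 (n + 1) ∧
    CF (SimpleGraph.pathGraph n) = Nat.clog 2 (n + 1) ∧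
    ODD (SimpleGraph.pathGraph n) = Nat.clog 2 (n + 1) := by
  classical
  set K := Nat.clog 2 (n+1) with hK
  have hpow : n + 1 ≤ 2 ^ K := Nat.le_pow_clog (by norm_num) _
  have hlt : ∀ i : Fin n, padicValNat 2 (i.val+1) < K := by
    intro i
    have hd : 2 ^ (padicValNat 2 (i.val+1)) ∣ (i.val+1) := pow_padicValNat_dvd
    have h1 := Nat.le_of_dvd (by omega) hd
    have h2 : 2 ^ padicValNat 2 (i.val+1) < 2 ^ K := by
      have := i.isLt; omega
    exact (Nat.pow_lt_pow_iff_right (by norm_num)).mp h2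
  set C : Fin n → Fin K := fun i => ⟨padicValNat 2 (i.val+1), hlt i⟩ with hC
  have hUM : IsUMColoring (pathEdges (SimpleGraph.pathGraph n)) C := by
    intro e he
    rw [pathEdges_pathGraph] at he
    obtain ⟨a, b, hab, rfl⟩ := he
    obtain ⟨m, ⟨hm, hmax⟩, huniq⟩ := um_Icc a.val b.val hab
    have hmIcc := Finset.mem_Icc.mp hm
    have hmn : m < n := by have := b.isLt; omega
    refine ⟨⟨m, hmn⟩, ⟨?_, ?_⟩, ?_⟩
    · rw [Finset.mem_Icc]
      exact ⟨by simp [Fin.le_def]; omega, by simp [Fin.le_def]; omega⟩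
    · intro u hu
      rw [Finset.mem_Icc] at hu
      have : u.val ∈ Finset.Icc a.val b.val := by
        rw [Finset.mem_Icc]
        exact ⟨hu.1, hu.2⟩
      exact hmax u.val this
    · rintro v ⟨hv, hvmax⟩
      rw [Finset.mem_Icc] at hv
      have hv' : v.val ∈ Finset.Icc a.val b.val := Finset.mem_Icc.mpr ⟨hv.1, hv.2⟩
      have : v.val = m := by
        apply huniq
        refine ⟨hv', ?_⟩
        intro u hu
        rw [Finset.mem_Icc] at hu
        have hun : u < n := by have := b.isLt; omega
        have := hvmax ⟨u, hun⟩ (Finset.mem_Icc.mpr ⟨by exact hu.1, by exact hu.2⟩)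
        simpa [hC, Fin.le_def] using this
      exact Fin.ext this
  have hCF : IsCFColoring (pathEdges (SimpleGraph.pathGraph n)) C := um_to_cf hUM
  have hODD : IsOddColoring (pathEdges (SimpleGraph.pathGraph n)) C := cf_to_odd hCF
  have hlb : ∀ k : ℕ, (∃ C' : Fin n → Fin k,
      IsOddColoring (pathEdges (SimpleGraph.pathGraph n)) C') → K ≤ k := by
    rintro k ⟨C', hC'⟩
    exact (Nat.clog_le_iff_le_pow (by norm_num)).mpr (odd_lower hn C' hC')
  refine ⟨?_, ?_, ?_⟩
  · refine le_antisymm (Nat.sInf_le ⟨C, hUM⟩) (le_csInf ⟨K, C, hUM⟩ ?_)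
    rintro k ⟨C', hC'⟩
    exact hlb k ⟨C', cf_to_odd (um_to_cf hC')⟩
  · refine le_antisymm (Nat.sInf_le ⟨C, hCF⟩) (le_csInf ⟨K, C, hCF⟩ ?_)
    rintro k ⟨C', hC'⟩
    exact hlb k ⟨C', cf_to_odd hC'⟩
  · exact le_antisymm (Nat.sInf_le ⟨C, hODD⟩) (le_csInf ⟨K, C, hODD⟩ hlb)
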